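/- Let X = (X⁽¹⁾, X⁽²⁾) be uniformly distributed on (ZMod 2)² and Δ = (Δ⁽¹⁾, Δ⁽²⁾) a (ZMod 2)²-valued random variable independent of X, and set Y = X + Δ. Then the conditional mutual information I[X⁽²⁾ ; Y | X⁽¹⁾] = log 2 − H[Δ⁽²⁾ | Δ⁽¹⁾]. (This identity underlies the rate condition for successive decoding of Z errors given knowledge of X errors on a Pauli channel.) -/

import Mathlib

open MeasureTheory

/-- Shannon entropy (in nats) of a random variable `X` taking values in a finite type,
`H[X] = ∑ s, (-P[X = s]) * log P[X = s]`. -/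
noncomputable def entropy {Ω S : Type*} [MeasurableSpace Ω] [Fintype S]
    (μ : Measure Ω) (X : Ω → S) : ℝ :=
  ∑ s : S, Real.negMulLog (μ (X ⁻¹' {s})).toReal

/-- Conditional Shannon entropy (in nats), `H[X | Z] = H[(X, Z)] - H[Z]` (chain rule). -/
noncomputable def condEntropy {Ω S T : Type*} [MeasurableSpace Ω] [Fintype S] [Fintype T]
    (μ : Measure Ω) (X : Ω → S) (Z : Ω → T) : ℝ :=
  entropy μ (fun ω => (X ω, Z ω)) - entropy μ Z

/-- Conditional mutual information (in nats):
`I[X ; Y | Z] = H[X | Z] + H[Y | Z] - H[(X, Y) | Z]`. -/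
noncomputable def condMutualInfo {Ω S T U : Type*} [MeasurableSpace Ω]
    [Fintype S] [Fintype T] [Fintype U]
    (μ : Measure Ω) (X : Ω → S) (Y : Ω → T) (Z : Ω → U) : ℝ :=
  condEntropy μ X Z + condEntropy μ Y Z - condEntropy μ (fun ω => (X ω, Y ω)) Z

section Aux

variable {Ω : Type*} [MeasurableSpace Ω] (μ : Measure Ω) [IsProbabilityMeasure μ]
    (X Δ : Ω → ZMod 2 × ZMod 2)

lemma key (hXm : ∀ a : ZMod 2 × ZMod 2, MeasurableSet (X ⁻¹' {a}))
    (hΔm : ∀ a : ZMod 2 × ZMod 2, MeasurableSet (Δ ⁻¹' {a}))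
    (hunif : ∀ a : ZMod 2 × ZMod 2,
      μ (X ⁻¹' {a}) = (Nat.card (ZMod 2 × ZMod 2) : ENNReal)⁻¹)
    (hindep : ∀ a d : ZMod 2 × ZMod 2,
      μ (X ⁻¹' {a} ∩ Δ ⁻¹' {d}) = μ (X ⁻¹' {a}) * μ (Δ ⁻¹' {d}))
    {S : Type*} [Fintype S] [DecidableEq S]
    (f : (ZMod 2 × ZMod 2) × (ZMod 2 × ZMod 2) → S) (s : S) :
    (μ ((fun ω => f (X ω, Δ ω)) ⁻¹' {s})).toReal
      = ∑ ad ∈ Finset.univ.filter (fun ad => f ad = s),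
          (1/4 : ℝ) * (μ (Δ ⁻¹' {ad.2})).toReal := by
  have hset : (fun ω => f (X ω, Δ ω)) ⁻¹' {s}
      = ⋃ ad ∈ Finset.univ.filter (fun ad => f ad = s),
          (X ⁻¹' {ad.1} ∩ Δ ⁻¹' {ad.2}) := by
    ext ω
    simp only [Set.mem_preimage, Set.mem_singleton_iff, Set.mem_iUnion,
      Finset.mem_filter, Finset.mem_univ, true_and, Set.mem_inter_iff]
    constructor
    · intro h
      exact ⟨(X ω, Δ ω), h, rfl, rfl⟩
    · rintro ⟨⟨a, d⟩, hf, ha, hd⟩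
      simp only [Set.mem_singleton_iff] at ha hd
      subst ha; subst hd; exact hf
  have hdisj : (↑(Finset.univ.filter (fun ad => f ad = s)) :
      Set ((ZMod 2 × ZMod 2) × (ZMod 2 × ZMod 2))).PairwiseDisjoint
      (fun ad => X ⁻¹' {ad.1} ∩ Δ ⁻¹' {ad.2}) := by
    intro p _ q _ hpq
    apply Set.disjoint_left.2
    rintro ω ⟨hx1, hd1⟩ ⟨hx2, hd2⟩
    simp only [Set.mem_preimage, Set.mem_singleton_iff] at hx1 hd1 hx2 hd2
    exact hpq (Prod.ext (hx1 ▸ hx2.symm) (hd1 ▸ hd2.symm)).symm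
  rw [hset, measure_biUnion_finset hdisj (fun b _ => (hXm b.1).inter (hΔm b.2))]
  rw [ENNReal.toReal_sum (fun a _ => by
    rw [hindep, hunif]
    exact ENNReal.mul_ne_top (by simp) (measure_ne_top μ _))]
  refine Finset.sum_congr rfl fun ad _ => ?_
  rw [hindep, hunif]
  rw [ENNReal.toReal_mul]
  congr 1
  simp [Nat.card_eq_fintype_card]

lemma entKey (hXm : ∀ a : ZMod 2 × ZMod 2, MeasurableSet (X ⁻¹' {a}))
    (hΔm : ∀ a : ZMod 2 × ZMod 2, MeasurableSet (Δ ⁻¹' {a}))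
    (hunif : ∀ a : ZMod 2 × ZMod 2,
      μ (X ⁻¹' {a}) = (Nat.card (ZMod 2 × ZMod 2) : ENNReal)⁻¹)
    (hindep : ∀ a d : ZMod 2 × ZMod 2,
      μ (X ⁻¹' {a} ∩ Δ ⁻¹' {d}) = μ (X ⁻¹' {a}) * μ (Δ ⁻¹' {d}))
    {S : Type*} [Fintype S] [DecidableEq S]
    (f : (ZMod 2 × ZMod 2) × (ZMod 2 × ZMod 2) → S) :
    entropy μ (fun ω => f (X ω, Δ ω))
      = ∑ s : S, Real.negMulLog (∑ ad ∈ Finset.univ.filter (fun ad => f ad = s),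
          (1/4 : ℝ) * (μ (Δ ⁻¹' {ad.2})).toReal) := by
  unfold entropy
  exact Finset.sum_congr rfl fun s _ => by
    rw [key μ X Δ hXm hΔm hunif hindep f s]

end Aux

set_option maxHeartbeats 2000000 in
/-- Let `X = (X⁽¹⁾, X⁽²⁾)` be uniform on `(ZMod 2)²`, `Δ = (Δ⁽¹⁾, Δ⁽²⁾)`
independent of `X`, and `Y = X + Δ`.  Then `I[X⁽²⁾ ; Y | X⁽¹⁾] = log 2 - H[Δ⁽²⁾ | Δ⁽¹⁾]`. -/
theorem stmt_16 {Ω : Type*} [MeasurableSpace Ω] (μ : Measure Ω) [IsProbabilityMeasure μ]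
    (X Δ : Ω → ZMod 2 × ZMod 2)
    (hXm : ∀ a : ZMod 2 × ZMod 2, MeasurableSet (X ⁻¹' {a}))
    (hΔm : ∀ a : ZMod 2 × ZMod 2, MeasurableSet (Δ ⁻¹' {a}))
    (hunif : ∀ a : ZMod 2 × ZMod 2,
      μ (X ⁻¹' {a}) = (Nat.card (ZMod 2 × ZMod 2) : ENNReal)⁻¹)
    (hindep : ∀ a d : ZMod 2 × ZMod 2,
      μ (X ⁻¹' {a} ∩ Δ ⁻¹' {d}) = μ (X ⁻¹' {a}) * μ (Δ ⁻¹' {d}))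
    (Y : Ω → ZMod 2 × ZMod 2) (hY : ∀ ω, Y ω = X ω + Δ ω) :
    condMutualInfo μ (fun ω => (X ω).2) Y (fun ω => (X ω).1)
      = Real.log 2 - condEntropy μ (fun ω => (Δ ω).2) (fun ω => (Δ ω).1) := by
  unfold condMutualInfo condEntropy
  simp only [hY]
  have h1 : entropy μ (fun ω => ((X ω).2, (X ω).1)) = _ :=
    entKey μ X Δ hXm hΔm hunif hindep (fun ad => (ad.1.2, ad.1.1))
  have h2 : entropy μ (fun ω => (X ω).1) = _ :=
    entKey μ X Δ hXm hΔm hunif hindep (fun ad => ad.1.1)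
  have h3 : entropy μ (fun ω => (X ω + Δ ω, (X ω).1)) = _ :=
    entKey μ X Δ hXm hΔm hunif hindep (fun ad => (ad.1 + ad.2, ad.1.1))
  have h4 : entropy μ (fun ω => (((X ω).2, X ω + Δ ω), (X ω).1)) = _ :=
    entKey μ X Δ hXm hΔm hunif hindep (fun ad => ((ad.1.2, ad.1 + ad.2), ad.1.1))
  have h5 : entropy μ (fun ω => ((Δ ω).2, (Δ ω).1)) = _ :=
    entKey μ X Δ hXm hΔm hunif hindep (fun ad => (ad.2.2, ad.2.1))
  have h6 : entropy μ (fun ω => (Δ ω).1) = _ :=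
    entKey μ X Δ hXm hΔm hunif hindep (fun ad => ad.2.1)
  rw [h1, h2, h3, h4, h5, h6]
  have univZ2 : (Finset.univ : Finset (ZMod 2)) = {0,1} := by decide
  have sumZ2 : ∀ f : ZMod 2 → ℝ, ∑ i, f i = f 0 + f 1 := by
    intro f; rw [univZ2]; rw [Finset.sum_pair (by decide)]
  simp only [Finset.sum_filter, Fintype.sum_prod_type, sumZ2]
  norm_num [Prod.ext_iff, Prod.fst_add, Prod.snd_add, Prod.fst_one, Prod.snd_one,
    Prod.fst_zero, Prod.snd_zero, show ((1:ZMod 2)+1 = 0) from rfl,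
    show ((0:ZMod 2) ≠ 1) from by decide, show ((1:ZMod 2) ≠ 0) from by decide,
    show ((2:ZMod 2) = 0) from by decide, show ((2:ZMod 2) ≠ 1) from by decide,
    show ((2:ZMod 2 × ZMod 2) = 0) from by decide]
  have hsum : (μ (Δ ⁻¹' {(0 : ZMod 2 × ZMod 2)})).toReal
      + (μ (Δ ⁻¹' {((0,1) : ZMod 2 × ZMod 2)})).toReal
      + (μ (Δ ⁻¹' {((1,0) : ZMod 2 × ZMod 2)})).toReal
      + (μ (Δ ⁻¹' {(1 : ZMod 2 × ZMod 2)})).toReal = 1 := by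
    have hU : (Set.univ : Set Ω)
        = ⋃ d0 ∈ (Finset.univ : Finset (ZMod 2 × ZMod 2)), Δ ⁻¹' {d0} := by
      ext ω; simp
    have hd : (↑(Finset.univ : Finset (ZMod 2 × ZMod 2)) :
        Set (ZMod 2 × ZMod 2)).PairwiseDisjoint (fun d0 => Δ ⁻¹' {d0}) := by
      intro p _ q _ hpq
      apply Set.disjoint_left.2
      rintro ω h1 h2
      simp only [Set.mem_preimage, Set.mem_singleton_iff] at h1 h2
      exact hpq (h1 ▸ h2 ▸ rfl)
    have h1 : (1 : ENNReal) = ∑ d0 : ZMod 2 × ZMod 2, μ (Δ ⁻¹' {d0}) := by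
      rw [← measure_univ (μ := μ), hU, measure_biUnion_finset hd (fun d0 _ => hΔm d0)]
    have h2 := congrArg ENNReal.toReal h1
    rw [ENNReal.toReal_sum (fun x _ => measure_ne_top μ _)] at h2
    simp only [ENNReal.toReal_one, Fintype.sum_prod_type, sumZ2] at h2
    rw [h2, show ((0,0) : ZMod 2 × ZMod 2) = 0 from rfl,
      show ((1,1) : ZMod 2 × ZMod 2) = 1 from rfl]
    ring
  rw [show ((0,0) : ZMod 2 × ZMod 2) = 0 from rfl,
    show ((1,1) : ZMod 2 × ZMod 2) = 1 from rfl]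
  set a := (μ (Δ ⁻¹' {(0 : ZMod 2 × ZMod 2)})).toReal with ha
  set b := (μ (Δ ⁻¹' {((0,1) : ZMod 2 × ZMod 2)})).toReal with hb
  set c := (μ (Δ ⁻¹' {((1,0) : ZMod 2 × ZMod 2)})).toReal with hc
  set d := (μ (Δ ⁻¹' {(1 : ZMod 2 × ZMod 2)})).toReal with hd
  simp only [if_pos (show ((2:ZMod 2 × ZMod 2)) = 0 by decide),
    if_pos (show ((2:ZMod 2)) = 0 by decide)]
  rw [show 1/4*a+1/4*b+(1/4*c+1/4*d)+(1/4*a+1/4*b+(1/4*c+1/4*d)) = (1/2 : ℝ) from by linarith,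
    show 1/4*a+1/4*b+(1/4*c+1/4*d) = (1/4 : ℝ) from by linarith,
    show 1/4*a+1/4*b = (1/4:ℝ)*(a+b) from by ring,
    show 1/4*b+1/4*a = (1/4:ℝ)*(a+b) from by ring,
    show 1/4*c+1/4*d = (1/4:ℝ)*(c+d) from by ring,
    show 1/4*d+1/4*c = (1/4:ℝ)*(c+d) from by ring]
  have hq : Real.negMulLog (1/4 : ℝ) = 1/2 * Real.log 2 := by
    rw [Real.negMulLog, show (1/4:ℝ) = ((2:ℝ)^2)⁻¹ by norm_num, Real.log_inv, Real.log_pow]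
    push_cast; ring
  have hh : Real.negMulLog (1/2 : ℝ) = 1/2 * Real.log 2 := by
    rw [Real.negMulLog, show (1/2:ℝ) = ((2:ℝ))⁻¹ by norm_num, Real.log_inv]
    ring
  simp only [Real.negMulLog_mul, hq, hh]
  ring_nf
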